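/- Let L/K be a finite Galois field extension, G a group acting on L via a surjection onto Gal(L/K) with kernel H, and V a semilinear representation of G over L (of finite dimension n over L). Then there is an isomorphism of L ⋊ G-modules (L ⋊ G) ⊗_{L[H]} (V restricted to L[H]) ≅ V^{⊕[L:K]}. -/

import Mathlib

universe u

set_option linter.unusedSectionVars false
set_option maxHeartbeats 1000000

section Stmt8Aux

variable {K L : Type*} [Field K] [Field L] [Algebra K L]
variable {G : Type*} [Group G] (σ : G →* (L ≃ₐ[K] L))
variable {V : Type u} [AddCommGroup V] [Module K V] [Module L V] [IsScalarTower K L V]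
variable (ρV : G →* (V ≃ₗ[K] V))
variable {m : ℕ} (ι : Fin m ≃ (L ≃ₐ[K] L))

/-- right action of `G` on the index set -/
def s8act (g : G) (i : Fin m) : Fin m := ι.symm (ι i * σ g)

lemma s8act_act (g g' : G) (i : Fin m) :
    s8act σ ι g' (s8act σ ι g i) = s8act σ ι (g * g') i := by
  simp [s8act, map_mul, mul_assoc]

lemma s8act_one (i : Fin m) : s8act σ ι 1 i = i := by simp [s8act]

/-- the twisted `G`-action on `Fin m → V`, as a `K`-linear map. -/
def s8lin (g : G) : (Fin m → V) →ₗ[K] (Fin m → V) where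
  toFun ψ i := ρV g (ψ (s8act σ ι g i))
  map_add' ψ ψ' := by funext i; simp
  map_smul' c ψ := by funext i; simp

lemma s8lin_apply (g : G) (ψ : Fin m → V) (i : Fin m) :
    s8lin σ ρV ι g ψ i = ρV g (ψ (s8act σ ι g i)) := rfl

lemma s8lin_comp (g g' : G) (ψ : Fin m → V) :
    s8lin σ ρV ι g (s8lin σ ρV ι g' ψ) = s8lin σ ρV ι (g * g') ψ := by
  funext i
  rw [s8lin_apply, s8lin_apply, s8lin_apply, s8act_act, map_mul]
  rfl

lemma s8lin_one (ψ : Fin m → V) : s8lin σ ρV ι 1 ψ = ψ := by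
  funext i
  rw [s8lin_apply, s8act_one, map_one]
  rfl

/-- the twisted `G`-action, as a `K`-linear equivalence. -/
def s8equiv (g : G) : (Fin m → V) ≃ₗ[K] (Fin m → V) :=
  LinearEquiv.ofLinear (s8lin σ ρV ι g) (s8lin σ ρV ι g⁻¹)
    (LinearMap.ext fun ψ => by
      simp only [LinearMap.comp_apply, LinearMap.id_apply, s8lin_comp, mul_inv_cancel,
        s8lin_one])
    (LinearMap.ext fun ψ => by
      simp only [LinearMap.comp_apply, LinearMap.id_apply, s8lin_comp, inv_mul_cancel,
        s8lin_one])

/-- the twisted `G`-action as a monoid hom. -/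
def s8rho : G →* ((Fin m → V) ≃ₗ[K] (Fin m → V)) where
  toFun := s8equiv σ ρV ι
  map_one' := LinearEquiv.ext fun ψ => s8lin_one σ ρV ι ψ
  map_mul' g g' := LinearEquiv.ext fun ψ => (s8lin_comp σ ρV ι g g' ψ).symm

lemma s8rho_apply (g : G) (ψ : Fin m → V) (i : Fin m) :
    s8rho σ ρV ι g ψ i = ρV g (ψ (s8act σ ι g i)) := rfl

end Stmt8Aux

lemma s8_matrix_isUnit {K L : Type*} [Field K] [Field L] [Algebra K L]
    {m : ℕ} (ι : Fin m ≃ (L ≃ₐ[K] L)) (b : Module.Basis (Fin m) K L) :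
    IsUnit (Matrix.of fun i j => (ι i)⁻¹ (b j) : Matrix (Fin m) (Fin m) L).det := by
  classical
  rw [isUnit_iff_ne_zero]
  intro hdet
  obtain ⟨v, hv0, hv⟩ := (Matrix.exists_vecMul_eq_zero_iff).2 hdet
  set φ : L →ₗ[K] L := ∑ i, v i • ((ι i)⁻¹ : L ≃ₐ[K] L).toLinearMap with hφdef
  have hφb : ∀ j, φ (b j) = 0 := by
    intro j
    have := congrFun hv j
    rw [Matrix.vecMul, dotProduct] at this
    simpa [hφdef, LinearMap.sum_apply, Matrix.of_apply, smul_eq_mul] using this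
  have hφ0 : φ = 0 := b.ext fun j => by simpa using hφb j
  have hLI : LinearIndependent L (fun (f : L ≃ₐ[K] L) => (f : L → L)) :=
    LinearIndependent.comp (ι' := L ≃ₐ[K] L)
      (linearIndependent_monoidHom L L) (fun f => f)
      (fun x y h => by ext; exact DFunLike.ext_iff.1 h _)
  have hinj : Function.Injective (fun i : Fin m => (ι i)⁻¹) :=
    fun i j h => ι.injective (inv_injective h)
  have hLI2 : LinearIndependent L (fun i : Fin m => (((ι i)⁻¹ : L ≃ₐ[K] L) : L → L)) :=
    hLI.comp _ hinj
  have := Fintype.linearIndependent_iff.1 hLI2 v ?_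
  · exact hv0 (funext this)
  · funext x
    have := DFunLike.congr_fun hφ0 x
    simpa [hφdef, LinearMap.sum_apply] using this

/-- Let `L/K` be a finite Galois field extension, `G` a group acting on
`L` via a surjection onto `Gal(L/K)` with kernel `H = ker σ`, and `V` a
finite-dimensional semilinear representation of `G` over `L`.  If `(T, β)` is the
induction `(L ⋊ G) ⊗_{L[H]} (V|_H)` — i.e. `β : V|_H → T` is an `L[H]`-linear map which
is universal among `L[H]`-linear maps from `V|_H` to semilinear representations of `G` —
then `T ≅ V^{⊕[L:K]}` as semilinear representations of `G` over `L`. -/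
theorem stmt8 {K L : Type*} [Field K] [Field L] [Algebra K L]
    [FiniteDimensional K L] [IsGalois K L]
    {G : Type*} [Group G] (σ : G →* (L ≃ₐ[K] L)) (hσ : Function.Surjective σ)
    (V : Type u) [AddCommGroup V] [Module K V] [Module L V] [IsScalarTower K L V]
    [FiniteDimensional L V]
    (ρV : G →* (V ≃ₗ[K] V)) (hρV : ∀ g (c : L) (v : V), ρV g (c • v) = σ g c • ρV g v)
    -- `(T, ρT, β)`: a semilinear representation of `G` with an `L[H]`-linear map from `V`
    (T : Type u) [AddCommGroup T] [Module K T] [Module L T] [IsScalarTower K L T]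
    (ρT : G →* (T ≃ₗ[K] T)) (hρT : ∀ g (c : L) (t : T), ρT g (c • t) = σ g c • ρT g t)
    (β : V →ₗ[L] T) (hβ : ∀ h ∈ σ.ker, ∀ v : V, β (ρV h v) = ρT h (β v))
    -- universal property of the induced module
    (huniv : ∀ (U : Type u) [AddCommGroup U] [Module K U] [Module L U]
      [IsScalarTower K L U] (ρU : G →* (U ≃ₗ[K] U)),
      (∀ g (c : L) (x : U), ρU g (c • x) = σ g c • ρU g x) →
      ∀ f : V →ₗ[L] U, (∀ h ∈ σ.ker, ∀ v : V, f (ρV h v) = ρU h (f v)) →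
      ∃! F : T →ₗ[L] U,
        (∀ (g : G) (t : T), F (ρT g t) = ρU g (F t)) ∧ ∀ v : V, F (β v) = f v) :
    -- conclusion: `T ≅ V^{⊕[L:K]}` equivariantly
    ∃ e : T ≃ₗ[L] (Fin (Module.finrank K L) → V),
      ∀ (g : G) (t : T) (i : Fin (Module.finrank K L)),
        e (ρT g t) i = ρV g (e t i) := by
  classical
  set m := Module.finrank K L with hm
  have hcard : Fintype.card (L ≃ₐ[K] L) = m :=
    Nat.card_eq_fintype_card.symm.trans (IsGalois.card_aut_eq_finrank K L)
  let ι : Fin m ≃ (L ≃ₐ[K] L) := (Fintype.equivFinOfCardEq hcard).symm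
  choose s hs using hσ
  -- computation helpers
  have hVmul : ∀ (g g' : G) (v : V), ρV (g * g') v = ρV g (ρV g' v) := fun g g' v => by
    rw [map_mul]; rfl
  have hTmul : ∀ (g g' : G) (t : T), ρT (g * g') t = ρT g (ρT g' t) := fun g g' t => by
    rw [map_mul]; rfl
  have hVone : ∀ v : V, ρV 1 v = v := fun v => by rw [map_one]; rfl
  have hTone : ∀ t : T, ρT 1 t = t := fun t => by rw [map_one]; rfl
  have hσc : ∀ (g g' : G) (c : L), σ (g * g') c = σ g (σ g' c) := fun g g' c => by
    rw [map_mul]; rfl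
  -- the model representation : `Fin m → V` with the twisted action
  let ρP : G →* ((Fin m → V) ≃ₗ[K] (Fin m → V)) := s8rho σ ρV ι
  have hρPapp : ∀ (g : G) (ψ : Fin m → V) (i : Fin m),
      ρP g ψ i = ρV g (ψ (s8act σ ι g i)) := fun g ψ i => rfl
  have hρP : ∀ g (c : L) (ψ : Fin m → V), ρP g (c • ψ) = σ g c • ρP g ψ := by
    intro g c ψ
    funext i
    rw [hρPapp, Pi.smul_apply, Pi.smul_apply, hρPapp, hρV]
  let i₁ : Fin m := ι.symm 1
  have hι₁ : ι i₁ = 1 := ι.apply_symm_apply 1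
  let βP : V →ₗ[L] (Fin m → V) :=
    { toFun := fun v => Pi.single i₁ v
      map_add' := fun v w => by
        funext j; by_cases h : j = i₁ <;> simp [Pi.single_apply, h]
      map_smul' := fun c v => by
        funext j; by_cases h : j = i₁ <;> simp [Pi.single_apply, h] }
  have hβPapp : ∀ (v : V) (j : Fin m), βP v j = if j = i₁ then v else 0 :=
    fun v j => Pi.single_apply i₁ v j
  have hβP : ∀ h ∈ σ.ker, ∀ v : V, βP (ρV h v) = ρP h (βP v) := by
    intro h hh v
    have hσh : σ h = 1 := hh
    funext j
    have hact : s8act σ ι h j = j := by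
      rw [s8act, hσh, mul_one, ι.symm_apply_apply]
    rw [hρPapp, hact, hβPapp, hβPapp]
    by_cases hj : j = i₁ <;> simp [hj]
  obtain ⟨F, ⟨hFeq, hFβ⟩, -⟩ := huniv (Fin m → V) ρP hρP βP hβP
  -- the coset representatives
  let a : Fin m → G := fun i => s ((ι i))⁻¹
  have hσa : ∀ i, σ (a i) = (ι i)⁻¹ := fun i => hs _
  -- the inverse map `F'`
  let F' : (Fin m → V) →ₗ[L] T :=
    { toFun := fun ψ => ∑ i, ρT (a i) (β (ρV (a i)⁻¹ (ψ i)))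
      map_add' := fun ψ ψ' => by
        rw [← Finset.sum_add_distrib]
        exact Finset.sum_congr rfl fun i _ => by simp [map_add]
      map_smul' := fun c ψ => by
        simp only [RingHom.id_apply]
        rw [Finset.smul_sum]
        refine Finset.sum_congr rfl fun i _ => ?_
        rw [Pi.smul_apply, hρV ((a i)⁻¹) c (ψ i), map_smul, hρT]
        congr 1
        rw [← hσc, mul_inv_cancel, map_one]
        rfl }
  have hF'app : ∀ ψ : Fin m → V, F' ψ = ∑ i, ρT (a i) (β (ρV (a i)⁻¹ (ψ i))) :=
    fun ψ => rfl
  -- equivariance of `F'`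
  let actE : G → (Fin m ≃ Fin m) := fun g =>
    { toFun := s8act σ ι g
      invFun := s8act σ ι g⁻¹
      left_inv := fun i => by rw [s8act_act, mul_inv_cancel, s8act_one]
      right_inv := fun i => by rw [s8act_act, inv_mul_cancel, s8act_one] }
  have hactE : ∀ (g : G) (i : Fin m), actE g i = s8act σ ι g i := fun _ _ => rfl
  have hF'eq : ∀ (g : G) (ψ : Fin m → V), F' (ρP g ψ) = ρT g (F' ψ) := by
    intro g ψ
    rw [hF'app, hF'app, map_sum]
    refine Fintype.sum_equiv (actE g) _ _ fun i => ?_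
    rw [hactE]
    set x := ψ (s8act σ ι g i) with hx
    set A := a i with hA
    set B := a (s8act σ ι g i) with hB
    have hσB : σ B = (ι i * σ g)⁻¹ := by
      rw [hB, hσa]
      congr 1
      exact ι.apply_symm_apply _
    have hker : A⁻¹ * g * B ∈ σ.ker := by
      rw [MonoidHom.mem_ker, map_mul, map_mul, map_inv, hA, hσa, hσB]
      group
    calc ρT A (β (ρV A⁻¹ (ρP g ψ i)))
        = ρT A (β (ρV (A⁻¹ * g) x)) := by rw [hρPapp, ← hVmul, hx]
      _ = ρT A (β (ρV ((A⁻¹ * g * B) * B⁻¹) x)) := by rw [mul_inv_cancel_right]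
      _ = ρT A (β (ρV (A⁻¹ * g * B) (ρV B⁻¹ x))) := by rw [hVmul]
      _ = ρT A (ρT (A⁻¹ * g * B) (β (ρV B⁻¹ x))) := by rw [hβ _ hker]
      _ = ρT (A * (A⁻¹ * g * B)) (β (ρV B⁻¹ x)) := (hTmul _ _ _).symm
      _ = ρT (g * B) (β (ρV B⁻¹ x)) := by rw [show A * (A⁻¹ * g * B) = g * B by group]
      _ = ρT g (ρT B (β (ρV B⁻¹ x))) := hTmul _ _ _
  have hF'β : ∀ v : V, F' (βP v) = β v := by
    intro v
    rw [hF'app, Finset.sum_eq_single i₁]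
    · have hker' : (a i₁)⁻¹ ∈ σ.ker := by
        rw [MonoidHom.mem_ker, map_inv, hσa, hι₁]; exact inv_one
      rw [hβPapp, if_pos rfl, hβ _ hker', ← hTmul, mul_inv_cancel, hTone]
    · intro i _ hne
      rw [hβPapp, if_neg hne]
      simp
    · exact fun h => absurd (Finset.mem_univ i₁) h
  -- `F' ∘ F = id`
  have hinv1 : ∀ t : T, F' (F t) = t := by
    obtain ⟨F₀, -, hu⟩ := huniv T ρT hρT β hβ
    have h1 : F' ∘ₗ F = F₀ :=
      hu _ ⟨fun g t => by simp only [LinearMap.comp_apply, hFeq, hF'eq],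
            fun v => by simp only [LinearMap.comp_apply, hFβ, hF'β]⟩
    have h2 : LinearMap.id = F₀ :=
      hu _ ⟨fun g t => rfl, fun v => rfl⟩
    intro t
    exact DFunLike.congr_fun (h1.trans h2.symm) t
  -- decomposition of elements of the model
  have hdecomp : ∀ ψ : Fin m → V,
      (∑ i, ρP (a i) (βP (ρV (a i)⁻¹ (ψ i)))) = ψ := by
    intro ψ
    funext j
    rw [Finset.sum_apply, Finset.sum_eq_single j]
    · have hact : s8act σ ι (a j) j = i₁ := by
        rw [s8act, hσa, mul_inv_cancel]
      rw [hρPapp, hact, hβPapp, if_pos rfl, ← hVmul, mul_inv_cancel, hVone]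
    · intro i _ hne
      rw [hρPapp, hβPapp, if_neg, map_zero]
      intro hcon
      rw [s8act, hσa] at hcon
      have h2 : ι j * (ι i)⁻¹ = 1 := by
        have := congrArg ι hcon
        rw [ι.apply_symm_apply, hι₁] at this
        exact this
      exact hne (ι.injective (mul_inv_eq_one.mp h2)).symm
    · exact fun h => absurd (Finset.mem_univ j) h
  -- `F ∘ F' = id`
  have hinv2 : ∀ ψ : Fin m → V, F (F' ψ) = ψ := by
    intro ψ
    calc F (F' ψ) = F (F' (∑ i, ρP (a i) (βP (ρV (a i)⁻¹ (ψ i))))) := by rw [hdecomp]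
      _ = ∑ i, F (F' (ρP (a i) (βP (ρV (a i)⁻¹ (ψ i))))) := by rw [map_sum, map_sum]
      _ = ∑ i, ρP (a i) (βP (ρV (a i)⁻¹ (ψ i))) :=
          Finset.sum_congr rfl fun i _ => by rw [hF'eq, hFeq, hF'β, hFβ]
      _ = ψ := hdecomp ψ
  -- the equivariant equivalence `T ≃ (Fin m → V)` (twisted model)
  let e₁ : T ≃ₗ[L] (Fin m → V) :=
    LinearEquiv.ofLinear F F' (LinearMap.ext hinv2) (LinearMap.ext hinv1)
  have he₁ : ∀ t : T, e₁ t = F t := fun t => rfl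
  -- the matrix untwisting the model
  let b : Module.Basis (Fin m) K L := Module.finBasis K L
  let Mm : Matrix (Fin m) (Fin m) L := Matrix.of fun i j => (ι i)⁻¹ (b j)
  have hMu : IsUnit Mm.det := s8_matrix_isUnit ι b
  letI : Invertible Mm := Mm.invertibleOfIsUnitDet hMu
  let Nm : Matrix (Fin m) (Fin m) L := ⅟Mm
  have hMN : ∀ i j, (∑ k, Mm i k * Nm k j) = if i = j then 1 else 0 := by
    intro i j
    have h := congrFun (congrFun (mul_invOf_self Mm) i) j
    rwa [Matrix.mul_apply, Matrix.one_apply] at h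
  have hNM : ∀ i j, (∑ k, Nm i k * Mm k j) = if i = j then 1 else 0 := by
    intro i j
    have h := congrFun (congrFun (invOf_mul_self Mm) i) j
    rwa [Matrix.mul_apply, Matrix.one_apply] at h
  let Λ : (Fin m → V) ≃ₗ[L] (Fin m → V) :=
    { toFun := fun v i => ∑ j, Mm i j • v j
      invFun := fun ψ j => ∑ i, Nm j i • ψ i
      map_add' := fun v w => by
        funext i
        simp [smul_add, Finset.sum_add_distrib]
      map_smul' := fun c v => by
        funext i
        simp only [RingHom.id_apply, Pi.smul_apply]
        rw [Finset.smul_sum]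
        exact Finset.sum_congr rfl fun j _ => by
          rw [smul_smul, smul_smul, mul_comm]
      left_inv := fun v => by
        funext j
        show (∑ i, Nm j i • ∑ j', Mm i j' • v j') = v j
        have h1 : ∀ i, (Nm j i • ∑ j', Mm i j' • v j') = ∑ j', (Nm j i * Mm i j') • v j' := by
          intro i
          rw [Finset.smul_sum]
          exact Finset.sum_congr rfl fun j' _ => smul_smul _ _ _
        rw [Finset.sum_congr rfl fun i _ => h1 i, Finset.sum_comm]
        have h2 : ∀ j', (∑ i, (Nm j i * Mm i j') • v j') = (if j = j' then (1:L) else 0) • v j' := by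
          intro j'
          rw [← Finset.sum_smul, hNM j j']
        rw [Finset.sum_congr rfl fun j' _ => h2 j']
        simp [ite_smul]
      right_inv := fun ψ => by
        funext i
        show (∑ j, Mm i j • ∑ i', Nm j i' • ψ i') = ψ i
        have h1 : ∀ j, (Mm i j • ∑ i', Nm j i' • ψ i') = ∑ i', (Mm i j * Nm j i') • ψ i' := by
          intro j
          rw [Finset.smul_sum]
          exact Finset.sum_congr rfl fun i' _ => smul_smul _ _ _
        rw [Finset.sum_congr rfl fun j _ => h1 j, Finset.sum_comm]
        have h2 : ∀ i', (∑ j, (Mm i j * Nm j i') • ψ i') = (if i = i' then (1:L) else 0) • ψ i' := by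
          intro i'
          rw [← Finset.sum_smul, hMN i i']
        rw [Finset.sum_congr rfl fun i' _ => h2 i']
        simp [ite_smul] }
  have hΛapp : ∀ (v : Fin m → V) (i : Fin m), Λ v i = ∑ j, Mm i j • v j := fun v i => rfl
  have hΛeq : ∀ (g : G) (v : Fin m → V), Λ (fun i => ρV g (v i)) = ρP g (Λ v) := by
    intro g v
    funext i
    rw [hρPapp, hΛapp, hΛapp, map_sum]
    refine Finset.sum_congr rfl fun j _ => ?_
    rw [hρV]
    congr 1
    show Mm i j = σ g (Mm (s8act σ ι g i) j)
    have h3 : ι (s8act σ ι g i) = ι i * σ g := ι.apply_symm_apply _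
    show (ι i)⁻¹ (b j) = σ g ((ι (s8act σ ι g i))⁻¹ (b j))
    rw [h3, mul_inv_rev, AlgEquiv.mul_apply, ← AlgEquiv.mul_apply (σ g), mul_inv_cancel,
      AlgEquiv.one_apply]
  have hΛsymm : ∀ (g : G) (ψ : Fin m → V),
      Λ.symm (ρP g ψ) = fun i => ρV g (Λ.symm ψ i) := by
    intro g ψ
    apply Λ.injective
    rw [Λ.apply_symm_apply, hΛeq, Λ.apply_symm_apply]
  refine ⟨e₁.trans Λ.symm, fun g t i => ?_⟩
  show Λ.symm (e₁ (ρT g t)) i = ρV g (Λ.symm (e₁ t) i)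
  rw [he₁, he₁, hFeq, hΛsymm]
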